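/- Let H be a real Hilbert space, let A : H ⇒ H be maximally monotone with resolvent J_A, and let B : H → H be a continuous linear monotone operator (⟨Bx, x⟩ ≥ 0 for all x) with resolvent J_B, i.e. J_B : H → H satisfies J_B x + B(J_B x) = x for all x. Let T = Id − J_A + J_B ∘ (2J_A − Id) and define the sum operator (A + B)(x) = {u + Bx : u ∈ A(x)}. Then ran(Id − T) = J_B(ran(A + B)) and ran(A + B) = (Id + B)(ran(Id − T)), where F(S) denotes the image of the set S under F. -/

import Mathlib

open Set Pointwise

/-- Domain of a set-valued operator. -/
def svDom {X : Type*} (A : X → Set X) : Set X := {x | (A x).Nonempty}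

/-- Range of a set-valued operator. -/
def svRan {X : Type*} (A : X → Set X) : Set X := ⋃ x, A x

/-- Monotonicity of a set-valued operator. -/
def IsMonotoneOp {X : Type*} [NormedAddCommGroup X] [InnerProductSpace ℝ X]
    (A : X → Set X) : Prop :=
  ∀ ⦃x u y v : X⦄, u ∈ A x → v ∈ A y → 0 ≤ (inner ℝ (x - y) (u - v) : ℝ)

/-- Maximal monotonicity of a set-valued operator. -/
def IsMaxMonotoneOp {X : Type*} [NormedAddCommGroup X] [InnerProductSpace ℝ X]
    (A : X → Set X) : Prop :=
  IsMonotoneOp A ∧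
    ∀ x u : X, (∀ y v : X, v ∈ A y → 0 ≤ (inner ℝ (x - y) (u - v) : ℝ)) → u ∈ A x

/-- `A` is 3* monotone (rectangular): for every `x ∈ dom A` and `v ∈ ran A`, the set
`{⟪x - z, v - w⟫ : (z,w) ∈ gra A}` is bounded below. -/
def Is3StarMonotoneOp {X : Type*} [NormedAddCommGroup X] [InnerProductSpace ℝ X]
    (A : X → Set X) : Prop :=
  ∀ x ∈ svDom A, ∀ v ∈ svRan A,
    BddBelow {r : ℝ | ∃ z w : X, w ∈ A z ∧ r = (inner ℝ (x - z) (v - w) : ℝ)}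

/-- Two sets are nearly equal if they have the same closure and the same relative
(intrinsic) interior. -/
def NearEq {X : Type*} [NormedAddCommGroup X] [NormedSpace ℝ X] (C D : Set X) : Prop :=
  closure C = closure D ∧ intrinsicInterior ℝ C = intrinsicInterior ℝ D

/-- `J` is the resolvent of `A`: the single-valued, everywhere-defined map with
`x - J x ∈ A (J x)` for all `x`. -/
def IsResolventOf {X : Type*} [NormedAddCommGroup X] (J : X → X) (A : X → Set X) : Prop :=
  ∀ x : X, x - J x ∈ A (J x)

/-- The Douglas–Rachford operator `T = Id - J_A + J_B ∘ (2 J_A - Id)` built from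
the resolvents `J_A` and `J_B`. -/
noncomputable def drT {X : Type*} [NormedAddCommGroup X] [NormedSpace ℝ X]
    (JA JB : X → X) : X → X :=
  fun x => x - JA x + JB ((2 : ℝ) • JA x - x)

/-- Let `A` be maximally monotone on a real Hilbert space `H` with resolvent `J_A`, let
`B` be a continuous linear monotone operator with resolvent `J_B` (so
`J_B x + B (J_B x) = x`), and let `T = Id - J_A + J_B ∘ (2 J_A - Id)`. Then
`ran (Id - T) = J_B (ran (A + B))` and `ran (A + B) = (Id + B) (ran (Id - T))`. -/
theorem ran_id_sub_drT_linear_case {H : Type*} [NormedAddCommGroup H]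
    [InnerProductSpace ℝ H]
    (A : H → Set H) (hA : IsMaxMonotoneOp A)
    (JA : H → H) (hJA : IsResolventOf JA A)
    (B : H →L[ℝ] H) (hBmono : ∀ x : H, 0 ≤ (inner ℝ (B x) x : ℝ))
    (JB : H → H) (hJB : ∀ x : H, JB x + B (JB x) = x)
    (T : H → H) (hT : ∀ x : H, T x = x - JA x + JB ((2 : ℝ) • JA x - x)) :
    Set.range (fun x => x - T x) =
        JB '' svRan (fun x => (fun u => u + B x) '' A x) ∧
      svRan (fun x => (fun u => u + B x) '' A x) =
        (fun x => x + B x) '' Set.range (fun x => x - T x) := by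

  -- injectivity of Id + B
  have hinj : ∀ a b : H, a + B a = b + B b → a = b := by
    intro a b hab
    have h0 : (a - b) + B (a - b) = (a + B a) - (b + B b) := by rw [map_sub]; abel
    have h0' : (a - b) + B (a - b) = 0 := by rw [h0, hab, sub_self]
    have h1 : (0:ℝ) = inner ℝ ((a - b) + B (a - b)) (a - b) := by rw [h0']; simp
    rw [inner_add_left, real_inner_self_eq_norm_sq] at h1
    have h2 := hBmono (a - b)
    have h3 : ‖a - b‖^2 ≤ 0 := by linarith
    have h4 : ‖a - b‖ = 0 := by nlinarith [norm_nonneg (a - b)]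
    exact sub_eq_zero.mp (norm_eq_zero.mp h4)
  -- key identity
  have hres : ∀ x : H, x - T x = JB (x - JA x + B (JA x)) := by
    intro x
    apply hinj
    rw [hJB]
    have hx : x - T x = JA x - JB ((2:ℝ) • JA x - x) := by rw [hT]; abel
    have hq' : B (JB ((2:ℝ) • JA x - x)) = ((2:ℝ) • JA x - x) - JB ((2:ℝ) • JA x - x) :=
      eq_sub_of_add_eq' (hJB _)
    rw [hx, map_sub, hq', two_smul]
    abel
  have hJAuniq : ∀ x z : H, x - z ∈ A z → JA x = z := by
    intro x z hz
    have h := hA.1 (hJA x) hz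
    have h2 : (x - JA x) - (x - z) = -(JA x - z) := by abel
    rw [h2, inner_neg_right] at h
    have h3 : (inner ℝ (JA x - z) (JA x - z) : ℝ) ≤ 0 := by linarith
    have h4 : JA x - z = 0 := by
      rw [real_inner_self_eq_norm_sq] at h3
      have := norm_nonneg (JA x - z)
      have : ‖JA x - z‖ = 0 := by nlinarith
      exact norm_eq_zero.mp this
    exact sub_eq_zero.mp h4
  constructor
  · ext y
    constructor
    · rintro ⟨x, rfl⟩
      refine ⟨x - JA x + B (JA x), ?_, (hres x).symm⟩
      simp only [svRan, Set.mem_iUnion]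
      exact ⟨JA x, x - JA x, hJA x, rfl⟩
    · rintro ⟨v, hv, rfl⟩
      simp only [svRan, Set.mem_iUnion] at hv
      obtain ⟨z, u, hu, rfl⟩ := hv
      refine ⟨z + u, ?_⟩
      have hz : JA (z + u) = z := hJAuniq _ _ (by simpa using hu)
      show (z + u) - T (z + u) = JB (u + B z)
      rw [hres, hz]
      congr 1
      abel
  · ext y
    constructor
    · intro hy
      simp only [svRan, Set.mem_iUnion] at hy
      obtain ⟨z, u, hu, rfl⟩ := hy
      refine ⟨(z + u) - T (z + u), ⟨z + u, rfl⟩, ?_⟩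
      have hz : JA (z + u) = z := hJAuniq _ _ (by simpa using hu)
      have h5 : (z + u) - T (z + u) = JB (u + B z) := by
        rw [hres, hz]; congr 1; abel
      show ((z + u) - T (z + u)) + B ((z + u) - T (z + u)) = u + B z
      rw [h5]
      exact hJB _
    · rintro ⟨w, ⟨x, rfl⟩, rfl⟩
      simp only [svRan, Set.mem_iUnion]
      refine ⟨JA x, x - JA x, hJA x, ?_⟩
      show x - JA x + B (JA x) = (x - T x) + B (x - T x)
      rw [hres, hJB]
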